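/- Let λ_+, λ_- ∈ ℂ with λ_+ + λ_- = β_i ∈ ℝ and λ_+λ_- = β ∈ ℝ, and |λ_±| ≤ ρ ≤ 1. Then for every k ≥ 1, the k-th power of M = [[0,1],[-β,β_i]] satisfies ‖M^k‖₂ ≤ 2·ρ^{k-1}·(k+1). -/

import Mathlib

noncomputable def l2normR (A : Matrix (Fin 2) (Fin 2) ℝ) : ℝ :=
  ‖Matrix.toEuclideanCLM (𝕜 := ℝ) (n := Fin 2) A‖

private lemma l2normR_le_two_mul (A : Matrix (Fin 2) (Fin 2) ℝ) (c : ℝ)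
    (h : ∀ i j, |A i j| ≤ c) : l2normR A ≤ 2 * c := by
  have hc : 0 ≤ c := le_trans (abs_nonneg _) (h 0 0)
  refine ContinuousLinearMap.opNorm_le_bound _ (by positivity) fun x => ?_
  set y := Matrix.toEuclideanCLM (𝕜 := ℝ) (n := Fin 2) A x with hy
  have hyi : ∀ i, y i = A i 0 * x 0 + A i 1 * x 1 := by
    intro i
    have := Matrix.ofLp_toEuclideanCLM (n := Fin 2) (𝕜 := ℝ) A x
    have h2 := congrFun this i
    exact h2.trans (by simp [Matrix.mulVec, dotProduct, Fin.sum_univ_two])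
  have hxn : ‖x‖ ^ 2 = x 0 ^ 2 + x 1 ^ 2 := by
    rw [EuclideanSpace.norm_eq]
    rw [Real.sq_sqrt (by positivity)]
    simp [Fin.sum_univ_two, sq_abs]
  have hyn : ‖y‖ ^ 2 = y 0 ^ 2 + y 1 ^ 2 := by
    rw [EuclideanSpace.norm_eq]
    rw [Real.sq_sqrt (by positivity)]
    simp [Fin.sum_univ_two, sq_abs]
  have hb : ∀ i, y i ^ 2 ≤ (c * (|x 0| + |x 1|)) ^ 2 := by
    intro i
    have h1 : |y i| ≤ c * (|x 0| + |x 1|) := by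
      rw [hyi i]
      calc |A i 0 * x 0 + A i 1 * x 1| ≤ |A i 0 * x 0| + |A i 1 * x 1| := abs_add_le _ _
        _ = |A i 0| * |x 0| + |A i 1| * |x 1| := by rw [abs_mul, abs_mul]
        _ ≤ c * |x 0| + c * |x 1| := by
            gcongr <;> [exact h i 0; exact h i 1]
        _ = c * (|x 0| + |x 1|) := by ring
    calc y i ^ 2 = |y i| ^ 2 := (sq_abs _).symm
      _ ≤ (c * (|x 0| + |x 1|)) ^ 2 := by
          apply pow_le_pow_left₀ (abs_nonneg _) h1
  have hcross : (|x 0| + |x 1|) ^ 2 ≤ 2 * ‖x‖ ^ 2 := by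
    rw [hxn]
    nlinarith [sq_nonneg (|x 0| - |x 1|), sq_abs (x 0), sq_abs (x 1)]
  have hfin : ‖y‖ ^ 2 ≤ (2 * c * ‖x‖) ^ 2 := by
    rw [hyn]
    nlinarith [hb 0, hb 1, sq_nonneg c, sq_nonneg ‖x‖]
  nlinarith [norm_nonneg y, norm_nonneg x, hfin,
    mul_nonneg (mul_nonneg (by norm_num : (0:ℝ) ≤ 2) hc) (norm_nonneg x)]

private noncomputable def auxS (lp lm : ℂ) (n : ℕ) : ℂ :=
  ∑ ℓ ∈ Finset.range (n+1), lp ^ ℓ * lm ^ (n - ℓ)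

private noncomputable def auxT (lp lm : ℂ) : ℕ → ℂ
  | 0 => 0
  | (n+1) => auxS lp lm n

private lemma auxS_zero (lp lm : ℂ) : auxS lp lm 0 = 1 := by simp [auxS]

private lemma auxS_one (lp lm : ℂ) : auxS lp lm 1 = lp + lm := by
  simp [auxS, Finset.sum_range_succ]; ring

private lemma auxS_rec (lp lm : ℂ) (n : ℕ) :
    auxS lp lm (n+2) = (lp + lm) * auxS lp lm (n+1) - lp * lm * auxS lp lm n := by
  have h1 : lp * auxS lp lm (n+1) = ∑ ℓ ∈ Finset.range (n+2), lp ^ (ℓ+1) * lm ^ (n+1-ℓ) := by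
    rw [auxS, Finset.mul_sum]
    exact Finset.sum_congr rfl fun ℓ _ => by ring
  have h2 : lm * auxS lp lm (n+1) = ∑ ℓ ∈ Finset.range (n+2), lp ^ ℓ * lm ^ (n+2-ℓ) := by
    rw [auxS, Finset.mul_sum]
    refine Finset.sum_congr rfl fun ℓ hℓ => ?_
    have hℓ' : ℓ ≤ n + 1 := by
      simpa using Nat.lt_succ_iff.mp (Finset.mem_range.mp hℓ)
    have : n + 2 - ℓ = (n + 1 - ℓ) + 1 := by omega
    rw [this, pow_succ]
    ring
  have h3 : lp * lm * auxS lp lm n = ∑ ℓ ∈ Finset.range (n+1), lp ^ (ℓ+1) * lm ^ (n+1-ℓ) := by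
    rw [auxS, Finset.mul_sum]
    refine Finset.sum_congr rfl fun ℓ hℓ => ?_
    have hℓ' : ℓ ≤ n := Nat.lt_succ_iff.mp (Finset.mem_range.mp hℓ)
    have : n + 1 - ℓ = (n - ℓ) + 1 := by omega
    rw [this, pow_succ]
    ring
  have e1 : ∑ ℓ ∈ Finset.range (n+2), lp ^ (ℓ+1) * lm ^ (n+1-ℓ)
      = (∑ ℓ ∈ Finset.range (n+1), lp ^ (ℓ+1) * lm ^ (n+1-ℓ)) + lp ^ (n+2) := by
    rw [Finset.sum_range_succ]
    simp
  have e2 : auxS lp lm (n+2)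
      = (∑ ℓ ∈ Finset.range (n+2), lp ^ ℓ * lm ^ (n+2-ℓ)) + lp ^ (n+2) := by
    rw [auxS, Finset.sum_range_succ]
    simp
  have expand : (lp + lm) * auxS lp lm (n+1)
      = lp * auxS lp lm (n+1) + lm * auxS lp lm (n+1) := by ring
  rw [expand, h1, h2, h3, e1, e2]
  ring

private lemma auxS_abs_le (lp lm : ℂ) (ρ : ℝ) (hlp : ‖lp‖ ≤ ρ)
    (hlm : ‖lm‖ ≤ ρ) (n : ℕ) :
    ‖auxS lp lm n‖ ≤ (n + 1) * ρ ^ n := by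
  have hρ0 : 0 ≤ ρ := le_trans (norm_nonneg _) hlp
  rw [auxS]
  refine le_trans (norm_sum_le _ _) ?_
  calc ∑ ℓ ∈ Finset.range (n+1), ‖lp ^ ℓ * lm ^ (n - ℓ)‖
      ≤ ∑ ℓ ∈ Finset.range (n+1), ρ ^ n := by
        refine Finset.sum_le_sum fun ℓ hℓ => ?_
        have hℓ' : ℓ ≤ n := Nat.lt_succ_iff.mp (Finset.mem_range.mp hℓ)
        rw [norm_mul, norm_pow, norm_pow]
        calc ‖lp‖ ^ ℓ * ‖lm‖ ^ (n - ℓ)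
            ≤ ρ ^ ℓ * ρ ^ (n - ℓ) := by
              have h0p := norm_nonneg lp
              have h0m := norm_nonneg lm
              gcongr
          _ = ρ ^ n := by rw [← pow_add]; congr 1; omega
    _ = (n + 1) * ρ ^ n := by
        rw [Finset.sum_const, Finset.card_range]
        ring

private lemma aux_pow (lp lm : ℂ) (k : ℕ) :
    (!![0, 1; -(lp*lm), lp+lm] : Matrix (Fin 2) (Fin 2) ℂ) ^ (k+1)
      = !![-(lp*lm) * auxT lp lm k, auxS lp lm k;
           -(lp*lm) * auxS lp lm k, auxS lp lm (k+1)] := by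
  induction k with
  | zero =>
    simp [auxT, auxS_zero, auxS_one]
  | succ k ih =>
    rw [pow_succ, ih]
    rw [Matrix.mul_fin_two]
    have hT : auxT lp lm (k+1) = auxS lp lm k := rfl
    ext i j
    fin_cases i <;> fin_cases j <;>
      simp only [Fin.mk_zero, Fin.mk_one, Matrix.cons_val', Matrix.cons_val_zero,
        Matrix.cons_val_one, Matrix.head_cons, Matrix.empty_val', Matrix.cons_val_fin_one,
        Matrix.head_fin_const, Matrix.of_apply]
    · rw [hT]; ring
    · cases k with
      | zero => simp [auxT, auxS_zero, auxS_one]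
      | succ m =>
        have hT' : auxT lp lm (m+1) = auxS lp lm m := rfl
        rw [hT', auxS_rec]
        ring
    · ring
    · rw [auxS_rec]; ring

theorem stmt13 (β βi ρ : ℝ) (lp lm : ℂ)
    (hsum : lp + lm = (βi : ℂ)) (hprod : lp * lm = (β : ℂ))
    (hlp : ‖lp‖ ≤ ρ) (hlm : ‖lm‖ ≤ ρ) (hρ : ρ ≤ 1)
    (M : Matrix (Fin 2) (Fin 2) ℝ) (hM : M = !![0, 1; -β, βi]) :
    ∀ k : ℕ, 1 ≤ k → l2normR (M ^ k) ≤ 2 * ρ ^ (k - 1) * (k + 1) := by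
  intro k hk
  obtain ⟨m, rfl⟩ : ∃ m, k = m + 1 := ⟨k - 1, by omega⟩
  have hρ0 : 0 ≤ ρ := le_trans (norm_nonneg lp) hlp
  have hprod' : ‖lp * lm‖ ≤ ρ ^ 2 := by
    rw [norm_mul, sq]
    exact mul_le_mul hlp hlm (norm_nonneg _) hρ0
  -- identify the complexified matrix power
  have hmap : (M ^ (m+1)).map (Complex.ofReal)
      = (!![0, 1; -(lp*lm), lp+lm] : Matrix (Fin 2) (Fin 2) ℂ) ^ (m+1) := by
    have hbase : M.map (Complex.ofReal) = !![0, 1; -(lp*lm), lp+lm] := by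
      rw [hM, hprod, hsum]
      ext i j
      fin_cases i <;> fin_cases j <;> simp
    calc (M ^ (m+1)).map (Complex.ofReal)
        = (Complex.ofRealHom.mapMatrix (M ^ (m+1)) : Matrix (Fin 2) (Fin 2) ℂ) := rfl
      _ = (Complex.ofRealHom.mapMatrix M : Matrix (Fin 2) (Fin 2) ℂ) ^ (m+1) := by
          rw [map_pow]
      _ = (M.map (Complex.ofReal)) ^ (m+1) := rfl
      _ = _ := by rw [hbase]
  have habs : ∀ i j, |(M ^ (m+1)) i j|
      = ‖((M ^ (m+1)).map (Complex.ofReal)) i j‖ := by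
    intro i j
    rw [Matrix.map_apply, Complex.norm_real, Real.norm_eq_abs]
  set c : ℝ := ((m : ℝ) + 2) * ρ ^ m with hc
  have hpow_le : ρ ^ (m+1) ≤ ρ ^ m := pow_le_pow_of_le_one hρ0 hρ (by omega)
  have hpow_le2 : ρ ^ (m+2) ≤ ρ ^ m := pow_le_pow_of_le_one hρ0 hρ (by omega)
  have hentry : ∀ i j, |(M ^ (m+1)) i j| ≤ c := by
    intro i j
    rw [habs i j, hmap, aux_pow]
    have hSm := auxS_abs_le lp lm ρ hlp hlm m
    have hSm1 := auxS_abs_le lp lm ρ hlp hlm (m+1)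
    fin_cases i <;> fin_cases j <;>
      simp only [Fin.mk_zero, Fin.mk_one, Matrix.cons_val', Matrix.cons_val_zero,
        Matrix.cons_val_one, Matrix.head_cons, Matrix.empty_val', Matrix.cons_val_fin_one,
        Matrix.head_fin_const, Matrix.of_apply]
    · -- |-(lp*lm) * auxT m| ≤ c
      rw [norm_mul, norm_neg]
      cases m with
      | zero => simp [auxT, hc]
      | succ n =>
        have hT : auxT lp lm (n+1) = auxS lp lm n := rfl
        rw [hT]
        have hSn := auxS_abs_le lp lm ρ hlp hlm n
        calc ‖lp * lm‖ * ‖auxS lp lm n‖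
            ≤ ρ ^ 2 * (((n : ℝ) + 1) * ρ ^ n) :=
              mul_le_mul hprod' hSn (norm_nonneg _) (by positivity)
          _ = ((n : ℝ) + 1) * ρ ^ (n + 2) := by ring
          _ ≤ ((n : ℝ) + 3) * ρ ^ (n + 1) := by
              have := pow_le_pow_of_le_one hρ0 hρ (show n + 1 ≤ n + 2 by omega)
              have h1 : ((n : ℝ) + 1) ≤ (n : ℝ) + 3 := by linarith
              exact mul_le_mul h1 this (by positivity) (by positivity)
          _ = c := by rw [hc]; push_cast; ring
    · -- |auxS m| ≤ c
      refine hSm.trans ?_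
      rw [hc]
      have : ((m : ℝ) + 1) ≤ (m : ℝ) + 2 := by linarith
      exact mul_le_mul_of_nonneg_right this (by positivity)
    · -- |-(lp*lm) * auxS m| ≤ c
      rw [norm_mul, norm_neg]
      calc ‖lp * lm‖ * ‖auxS lp lm m‖
          ≤ ρ ^ 2 * (((m : ℝ) + 1) * ρ ^ m) :=
            mul_le_mul hprod' hSm (norm_nonneg _) (by positivity)
        _ ≤ 1 * (((m : ℝ) + 1) * ρ ^ m) := by
            have : ρ ^ 2 ≤ 1 := pow_le_one₀ hρ0 hρ
            exact mul_le_mul_of_nonneg_right this (by positivity)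
        _ = ((m : ℝ) + 1) * ρ ^ m := by ring
        _ ≤ c := by
            rw [hc]
            exact mul_le_mul_of_nonneg_right (by linarith) (by positivity)
    · -- |auxS (m+1)| ≤ c
      refine hSm1.trans ?_
      rw [hc]
      push_cast
      have h : ((m : ℝ) + 1 + 1) = ((m : ℝ) + 2) := by ring
      rw [h]
      exact mul_le_mul_of_nonneg_left hpow_le (by positivity)
  have := l2normR_le_two_mul (M ^ (m+1)) c hentry
  refine this.trans ?_
  rw [hc]
  have hidx : m + 1 - 1 = m := by omega
  rw [hidx]
  push_cast
  ring_nf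
  linarith [le_refl (2 * ρ ^ m * ((m : ℝ) + 2))]
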